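/- Let P be a complex polynomial of degree at most 2 and let a₀, a₁ ∈ ℂ be not both zero. Then there is no constant C > 0 such that |e^{P(w)} (a₁ w − a₀)| ≤ C · (log(1+|w|))^{1/2} / |w| for all w ∈ 𝒵∖{0}. -/

import Mathlib

open MeasureTheory Complex Filter
open scoped Real ComplexConjugate InnerProductSpace

noncomputable section

/-- The Gaussian integer lattice `𝒵 = {m + i n : m, n ∈ ℤ}`. -/
def Zlat : Set ℂ := {z | ∃ m n : ℤ, z = (m : ℂ) + (n : ℂ) * I}

/-- Choose a large natural number making the decay quantity small. -/
lemma aux_small (C ε R : ℝ) (hC : 0 < C) (hε : 0 < ε) :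
    ∃ m : ℕ, R ≤ m ∧ 1 ≤ (m : ℝ) ∧ C * Real.sqrt (Real.log (1 + (m : ℝ))) / m < ε := by
  obtain ⟨m, hm⟩ := exists_nat_gt (max R (max 1 ((C / ε) ^ 2)))
  have hR : R ≤ m := le_of_lt (lt_of_le_of_lt (le_max_left _ _) hm)
  have h1 : (1 : ℝ) ≤ m :=
    le_of_lt (lt_of_le_of_lt (le_trans (le_max_left _ _) (le_max_right _ _)) hm)
  have h2 : (C / ε) ^ 2 < m :=
    lt_of_le_of_lt (le_trans (le_max_right _ _) (le_max_right _ _)) hm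
  have hmpos : (0 : ℝ) < m := by linarith
  have hsqpos : (0 : ℝ) < Real.sqrt m := Real.sqrt_pos.2 hmpos
  refine ⟨m, hR, h1, ?_⟩
  have hlog : Real.log (1 + (m : ℝ)) ≤ m := by
    have := Real.log_le_sub_one_of_pos (show (0 : ℝ) < 1 + m by linarith)
    linarith
  have hsq : Real.sqrt (Real.log (1 + (m : ℝ))) ≤ Real.sqrt m := Real.sqrt_le_sqrt hlog
  have hstep : C * Real.sqrt (Real.log (1 + (m : ℝ))) / m ≤ C / Real.sqrt m := by
    rw [div_le_div_iff₀ hmpos hsqpos]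
    calc C * Real.sqrt (Real.log (1 + (m : ℝ))) * Real.sqrt m
        ≤ C * Real.sqrt m * Real.sqrt m := by gcongr
      _ = C * m := by rw [mul_assoc, Real.mul_self_sqrt hmpos.le]
  have hlast : C / Real.sqrt m < ε := by
    rw [div_lt_iff₀ hsqpos]
    have hce : C / ε < Real.sqrt m :=
      (Real.lt_sqrt (by positivity)).2 h2
    calc C = ε * (C / ε) := by field_simp
      _ < ε * Real.sqrt m := by exact (mul_lt_mul_iff_right₀ hε).2 hce
  linarith

/-- No function of the form `e^{P(w)}(a₁ w - a₀)` with `deg P ≤ 2` and `(a₀,a₁) ≠ (0,0)`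
can satisfy the decay bound `|e^{P(w)}(a₁ w - a₀)| ≲ log^{1/2}(1+|w|)/|w|` on `𝒵∖{0}`. -/
theorem no_decaying_exp_polynomial
    (P : Polynomial ℂ) (hP : P.degree ≤ 2) (a₀ a₁ : ℂ) (ha : ¬(a₀ = 0 ∧ a₁ = 0)) :
    ¬ ∃ C : ℝ, 0 < C ∧ ∀ w ∈ Zlat \ {0},
      ‖Complex.exp (P.eval w) * (a₁ * w - a₀)‖ ≤
        C * Real.sqrt (Real.log (1 + ‖w‖)) / ‖w‖ := by
  rintro ⟨C, hC, hbound⟩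
  set α := P.coeff 2 with hα
  set β := P.coeff 1 with hβ
  set γ := P.coeff 0 with hγ
  -- choose a good lattice direction
  obtain ⟨d, u, v, hduv, hdnorm, hq, hl⟩ :
      ∃ d : ℂ, ∃ u v : ℤ, d = (u : ℂ) + (v : ℂ) * I ∧ ‖d‖ = 1 ∧
        0 ≤ (α * d ^ 2).re ∧ 0 ≤ (β * d).re := by
    by_cases h1 : 0 ≤ α.re
    · by_cases h2 : 0 ≤ β.re
      · exact ⟨1, 1, 0, by simp, by simp, by simpa using h1, by simpa using h2⟩
      · refine ⟨-1, -1, 0, by simp, by simp, ?_, ?_⟩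
        · simpa using h1
        · simp only [mul_neg, mul_one, Complex.neg_re]
          linarith
    · by_cases h2 : 0 ≤ (β * I).re
      · refine ⟨I, 0, 1, by simp, by simp, ?_, h2⟩
        simp only [Complex.I_sq, mul_neg, mul_one, Complex.neg_re]
        linarith
      · refine ⟨-I, 0, -1, by push_cast; ring, by simp, ?_, ?_⟩
        · have h3 : ((-I : ℂ)) ^ 2 = -1 := by
            rw [neg_sq, Complex.I_sq]
          rw [h3]
          simp only [mul_neg, mul_one, Complex.neg_re]
          linarith
        · simp only [mul_neg, Complex.neg_re] at h2 ⊢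
          linarith
  have hdne : d ≠ 0 := by
    intro h; rw [h] at hdnorm; simp at hdnorm
  -- evaluation formula
  have hnd : P.natDegree < 3 :=
    lt_of_le_of_lt (Polynomial.natDegree_le_iff_degree_le.mpr hP) (by norm_num)
  have heval : ∀ w : ℂ, P.eval w = γ + β * w + α * w ^ 2 := by
    intro w
    rw [Polynomial.eval_eq_sum_range' hnd]
    simp only [Finset.sum_range_succ, Finset.sum_range_zero, ← hα, ← hβ, ← hγ,
      pow_zero, pow_one, mul_one, zero_add]
  have hre : ∀ m : ℕ, γ.re ≤ (P.eval ((m : ℂ) * d)).re := by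
    intro m
    have h1 : P.eval ((m : ℂ) * d)
        = γ + ((m : ℝ) : ℂ) * (β * d) + (((m : ℝ) ^ 2 : ℝ) : ℂ) * (α * d ^ 2) := by
      rw [heval]; push_cast; ring
    rw [h1]
    simp only [Complex.add_re, Complex.re_ofReal_mul]
    nlinarith [sq_nonneg (m : ℝ), Nat.cast_nonneg (α := ℝ) m]
  -- lower bound for the linear factor
  obtain ⟨ε, R, hε, hB⟩ :
      ∃ ε R : ℝ, 0 < ε ∧ ∀ m : ℕ, R ≤ m →
        ε ≤ Real.exp γ.re * ‖a₁ * ((m : ℂ) * d) - a₀‖ := by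
    by_cases h1 : a₁ = 0
    · have h0 : a₀ ≠ 0 := by
        intro h0; exact ha ⟨h0, h1⟩
      refine ⟨Real.exp γ.re * ‖a₀‖, 0, mul_pos (Real.exp_pos _) (norm_pos_iff.2 h0), ?_⟩
      intro m _
      simp [h1]
    · refine ⟨Real.exp γ.re, (‖a₀‖ + 1) / ‖a₁‖, Real.exp_pos _, ?_⟩
      intro m hm
      have ha₁ : (0 : ℝ) < ‖a₁‖ := norm_pos_iff.2 h1
      have hnorm : ‖a₁ * ((m : ℂ) * d)‖ = ‖a₁‖ * m := by
        simp [norm_mul, hdnorm]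
      have h2 : (1 : ℝ) ≤ ‖a₁ * ((m : ℂ) * d) - a₀‖ := by
        have h3 := norm_sub_norm_le (a₁ * ((m : ℂ) * d)) a₀
        have h4 : ‖a₀‖ + 1 ≤ ‖a₁‖ * m := by
          rw [div_le_iff₀ ha₁] at hm
          linarith [mul_comm ‖a₁‖ (m : ℝ)]
        rw [hnorm] at h3
        linarith
      calc Real.exp γ.re = Real.exp γ.re * 1 := by ring
        _ ≤ _ := by
            exact mul_le_mul_of_nonneg_left h2 (Real.exp_pos _).le
  -- choose a large m
  obtain ⟨m, hmR, hm1, hsmall⟩ := aux_small C ε R hC hε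
  set w : ℂ := (m : ℂ) * d with hw
  have hwnorm : ‖w‖ = m := by simp [hw, norm_mul, hdnorm]
  have hwmem : w ∈ Zlat \ {0} := by
    constructor
    · exact ⟨m * u, m * v, by rw [hw, hduv]; push_cast; ring⟩
    · simp only [Set.mem_singleton_iff]
      intro h
      have : (m : ℂ) ≠ 0 := by
        have : (0:ℝ) < (m : ℝ) := by linarith
        exact_mod_cast (by exact_mod_cast this : (0:ℝ) < (m:ℝ)).ne'
      exact this (by
        rcases mul_eq_zero.1 (hw ▸ h) with h' | h'
        · exact h'
        · exact absurd h' hdne)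
  have hlow : ε ≤ ‖Complex.exp (P.eval w) * (a₁ * w - a₀)‖ := by
    rw [norm_mul, Complex.norm_exp]
    calc ε ≤ Real.exp γ.re * ‖a₁ * w - a₀‖ := hB m hmR
      _ ≤ Real.exp ((P.eval w).re) * ‖a₁ * w - a₀‖ := by
          exact mul_le_mul_of_nonneg_right (Real.exp_le_exp.2 (hre m)) (norm_nonneg _)
  have hhigh := hbound w hwmem
  rw [hwnorm] at hhigh
  linarith
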